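/- Fix r ≥ 1, reals α_1,…,α_r, β > -1, and positive reals q_1,…,q_r with q_1+···+q_r = 1. Define F_n(x) = ₍r+1₎F_r(-⌊q_1n⌋-···-⌊q_rn⌋-β, α_1+⌊q_1n⌋+1,…,α_r+⌊q_rn⌋+1; α_1+1,…,α_r+1; x) as a power series in x. Then lim_{n→∞} F_n(z/n^{r+1}) = ₀F_r(-; α_1+1,…,α_r+1; -q_1···q_r z) uniformly on compact subsets of ℂ. -/

import Mathlib

open Filter

/-- Rising factorial (Pochhammer symbol). -/
noncomputable def poch (a : ℝ) (m : ℕ) : ℝ := ∏ i ∈ Finset.range m, (a + i)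

section JPaux
open Finset Topology



lemma poch_pos {a : ℝ} (ha : 0 < a) (k : ℕ) : 0 < poch a k :=
  Finset.prod_pos fun i _ => by positivity

lemma prod_cast_fact (k : ℕ) : ∏ i ∈ range k, ((1:ℝ) + i) = k.factorial := by
  rw [← Finset.prod_range_add_one_eq_factorial]
  push_cast
  exact Finset.prod_congr rfl fun i _ => by ring

lemma abs_poch_le {a M : ℝ} (h : |a| ≤ M) (k : ℕ) :
    |poch a k| ≤ ∏ i ∈ range k, (M + i) := by
  rw [poch, Finset.abs_prod]
  refine Finset.prod_le_prod (fun i _ => abs_nonneg _) fun i _ => ?_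
  calc |a + (i:ℝ)| ≤ |a| + i := by
        refine (abs_add_le _ _).trans ?_
        simp [abs_of_nonneg (by positivity : (0:ℝ) ≤ (i:ℝ))]
    _ ≤ M + i := by linarith

lemma poch_le {a M : ℝ} (h0 : 0 ≤ a) (h : a ≤ M) (k : ℕ) :
    poch a k ≤ ∏ i ∈ range k, (M + i) :=
  (le_abs_self _).trans (abs_poch_le (by rwa [abs_of_nonneg h0]) k)

lemma poch_ge {a c : ℝ} (hc : 0 < c) (hc1 : c ≤ 1) (h : c ≤ a) (k : ℕ) :
    c ^ k * k.factorial ≤ poch a k := by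
  have : ∏ i ∈ range k, (c * (1 + i)) ≤ poch a k := by
    refine Finset.prod_le_prod (fun i _ => by positivity) fun i _ => ?_
    have : c * (1 + i) = c + c * i := by ring
    rw [this]
    have : c * i ≤ 1 * i := by
      exact mul_le_mul_of_nonneg_right hc1 (by positivity)
    nlinarith
  calc c ^ k * (k.factorial : ℝ) = ∏ i ∈ range k, (c * (1 + i)) := by
        rw [Finset.prod_mul_distrib, Finset.prod_const, Finset.card_range, prod_cast_fact]
    _ ≤ poch a k := this

lemma term_norm_le (r : ℕ) (α : Fin r → ℝ) (β : ℝ) (q : Fin r → ℝ)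
    (B c R : ℝ) (hc0 : 0 < c) (hc1 : c ≤ 1) (hcα : ∀ j, c ≤ α j + 1)
    (hβB : |β| ≤ B) (hαB : ∀ j, α j + 1 ≤ B)
    (hq0 : ∀ j, 0 < q j) (hqle : ∀ j, q j ≤ 1) (hqsum : ∑ j, q j = 1)
    (hR : 0 ≤ R) (n k : ℕ) (hn : 1 ≤ n) (z : ℂ) (hz : ‖z‖ ≤ R) :
    ‖((poch (-((∑ j, (⌊q j * (n : ℝ)⌋ : ℝ)) + β)) k : ℂ) *
        ∏ j, (poch (α j + (⌊q j * (n : ℝ)⌋ : ℝ) + 1) k : ℂ)) *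
        (z / (n : ℂ) ^ (r + 1)) ^ k /
        ((∏ j, (poch (α j + 1) k : ℂ)) * (k.factorial : ℂ))‖
      ≤ ∏ i ∈ range k,
          (((n:ℝ) + B + i) ^ (r+1) * R / ((n:ℝ) ^ (r+1) * c ^ r * (1 + i) ^ (r+1))) := by
  have hn1 : (1:ℝ) ≤ (n:ℝ) := by exact_mod_cast hn
  have hB1 : (0:ℝ) ≤ B := (abs_nonneg β).trans hβB
  set S : ℝ := ∑ j, (⌊q j * (n : ℝ)⌋ : ℝ) with hS
  have hfl_nonneg : ∀ j, (0:ℝ) ≤ (⌊q j * (n : ℝ)⌋ : ℝ) := fun j => by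
    have : (0:ℝ) ≤ q j * n := mul_nonneg (hq0 j).le (by positivity)
    exact_mod_cast Int.floor_nonneg.2 this
  have hfl_le : ∀ j, (⌊q j * (n : ℝ)⌋ : ℝ) ≤ (n:ℝ) := fun j => by
    have h1 : (⌊q j * (n : ℝ)⌋ : ℝ) ≤ q j * n := Int.floor_le _
    nlinarith [hqle j, (hq0 j).le]
  have hS0 : 0 ≤ S := Finset.sum_nonneg fun j _ => hfl_nonneg j
  have hSn : S ≤ n := by
    calc S ≤ ∑ j : Fin r, q j * n := Finset.sum_le_sum fun j _ => Int.floor_le _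
    _ = (∑ j : Fin r, q j) * n := by rw [Finset.sum_mul]
    _ ≤ 1 * n := by
        exact mul_le_mul_of_nonneg_right hqsum.le (by positivity)
    _ = n := one_mul _
  set P : ℝ := ∏ i ∈ range k, ((n:ℝ) + B + i) with hP
  have hP0 : 0 ≤ P := Finset.prod_nonneg fun i _ => by positivity
  -- numerator piece 1
  have h1 : ‖((poch (-(S + β)) k : ℝ) : ℂ)‖ ≤ P := by
    rw [Complex.norm_real, Real.norm_eq_abs]
    refine abs_poch_le ?_ k
    calc |(-(S + β))| = |S + β| := abs_neg _
      _ ≤ |S| + |β| := abs_add_le _ _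
      _ ≤ (n:ℝ) + B := by rw [abs_of_nonneg hS0]; linarith
  have h2 : ‖∏ j, ((poch (α j + (⌊q j * (n : ℝ)⌋ : ℝ) + 1) k : ℝ) : ℂ)‖ ≤ P ^ r := by
    rw [norm_prod]
    calc ∏ j, ‖((poch (α j + (⌊q j * (n : ℝ)⌋ : ℝ) + 1) k : ℝ) : ℂ)‖
        ≤ ∏ _j : Fin r, P := by
          refine Finset.prod_le_prod (fun j _ => norm_nonneg _) fun j _ => ?_
          rw [Complex.norm_real, Real.norm_eq_abs]
          refine abs_poch_le ?_ k
          have hpos : 0 < α j + (⌊q j * (n : ℝ)⌋ : ℝ) + 1 := by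
            have := hfl_nonneg j; have := hcα j; linarith
          rw [abs_of_pos hpos]
          have := hfl_le j; have := hαB j; linarith
      _ = P ^ r := by rw [Finset.prod_const, Finset.card_univ, Fintype.card_fin]
  have h3 : ‖(z / (n : ℂ) ^ (r + 1)) ^ k‖ ≤ (R / (n:ℝ) ^ (r+1)) ^ k := by
    rw [norm_pow, norm_div, norm_pow, Complex.norm_natCast]
    refine pow_le_pow_left₀ (by positivity) ?_ k
    exact div_le_div_of_nonneg_right hz (by positivity) |>.trans_eq rfl
  have hDenEq : ‖(∏ j, ((poch (α j + 1) k : ℝ) : ℂ)) * (k.factorial : ℂ)‖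
      = (∏ j, poch (α j + 1) k) * (k.factorial : ℝ) := by
    rw [norm_mul, norm_prod, Complex.norm_natCast]
    congr 1
    refine Finset.prod_congr rfl fun j _ => ?_
    rw [Complex.norm_real, Real.norm_eq_abs, abs_of_pos (poch_pos (by have := hcα j; linarith) k)]
  have h4 : (c ^ k * (k.factorial:ℝ)) ^ r * (k.factorial:ℝ)
      ≤ ‖(∏ j, ((poch (α j + 1) k : ℝ) : ℂ)) * (k.factorial : ℂ)‖ := by
    rw [hDenEq]
    refine mul_le_mul_of_nonneg_right ?_ (by positivity)
    calc (c ^ k * (k.factorial:ℝ)) ^ r = ∏ _j : Fin r, (c ^ k * (k.factorial:ℝ)) := by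
          rw [Finset.prod_const, Finset.card_univ, Fintype.card_fin]
      _ ≤ ∏ j, poch (α j + 1) k :=
          Finset.prod_le_prod (fun j _ => by positivity) fun j _ => poch_ge hc0 hc1 (hcα j) k
  -- combine
  rw [norm_div, norm_mul]
  have hd0 : (0:ℝ) < (c ^ k * (k.factorial:ℝ)) ^ r * (k.factorial:ℝ) := by positivity
  calc ‖(poch (-(S + β)) k : ℂ) * ∏ j, (poch (α j + (⌊q j * (n : ℝ)⌋ : ℝ) + 1) k : ℂ)‖ *
        ‖(z / (n : ℂ) ^ (r + 1)) ^ k‖ /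
        ‖(∏ j, ((poch (α j + 1) k : ℝ) : ℂ)) * (k.factorial : ℂ)‖
      ≤ (P * P ^ r * (R / (n:ℝ) ^ (r+1)) ^ k) /
        ((c ^ k * (k.factorial:ℝ)) ^ r * (k.factorial:ℝ)) := by
        refine div_le_div₀ (by positivity) ?_ hd0 h4
        rw [norm_mul]
        have := mul_le_mul (mul_le_mul h1 h2 (norm_nonneg _) hP0) h3 (norm_nonneg _)
          (by positivity)
        exact this
    _ = ∏ i ∈ range k,
          (((n:ℝ) + B + i) ^ (r+1) * R / ((n:ℝ) ^ (r+1) * c ^ r * (1 + i) ^ (r+1))) := by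
        simp only [Finset.prod_div_distrib, Finset.prod_mul_distrib, Finset.prod_pow,
          Finset.prod_const, Finset.card_range]
        rw [prod_cast_fact, ← hP]
        have hkf : (0:ℝ) < (k.factorial : ℝ) := by positivity
        have hnn : (0:ℝ) < (n:ℝ) ^ (r+1) := by positivity
        have hn0' : (n:ℝ) ≠ 0 := by positivity
        field_simp
        have e1 : ((n:ℝ))^(r*k) * ((n:ℝ))⁻¹^(r*k) = 1 := by
          rw [← mul_pow, mul_inv_cancel₀ hn0', one_pow]
        have e2 : ((n:ℝ))^k * ((n:ℝ))⁻¹^k = 1 := by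
          rw [← mul_pow, mul_inv_cancel₀ hn0', one_pow]
        linear_combination (P * P ^ r * R ^ k * c ^ (r * k) * (k.factorial:ℝ) * (k.factorial:ℝ) ^ r) *
          (((n:ℝ))^k * ((n:ℝ))⁻¹^k) * e1 +
          (P * P ^ r * R ^ k * c ^ (r * k) * (k.factorial:ℝ) * (k.factorial:ℝ) ^ r) * e2

lemma prod_factor_le (B c R A : ℝ) (r : ℕ) (hB1 : 1 ≤ B) (hc0 : 0 < c) (hc1 : c ≤ 1)
    (hR : 0 ≤ R) (hA : (B+2)^(r+1) * R / c^r ≤ A) (hA0 : 0 ≤ A)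
    (n k : ℕ) (hn : 1 ≤ n) (h2A : 2*A ≤ (n:ℝ)) :
    ∏ i ∈ range k, (((n:ℝ)+B+i)^(r+1) * R/((n:ℝ)^(r+1)*c^r*(1+i)^(r+1)))
      ≤ A^k/k.factorial + ((2*A)^n/n.factorial) * (1/2)^k := by
  have hn1 : (1:ℝ) ≤ (n:ℝ) := by exact_mod_cast hn
  have hn0 : (0:ℝ) < (n:ℝ) := by linarith
  set F : ℕ → ℝ := fun i => ((n:ℝ)+B+i)^(r+1) * R/((n:ℝ)^(r+1)*c^r*(1+i)^(r+1)) with hF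
  have ht0 : ∀ i:ℕ, (0:ℝ) ≤ (n:ℝ)+B+i := fun i => by
    have : (0:ℝ) ≤ (i:ℝ) := by positivity
    linarith
  have hFnn : ∀ i:ℕ, 0 ≤ F i := fun i => by
    have := ht0 i
    have h1 : (0:ℝ) ≤ ((n:ℝ)+B+i)^(r+1) := by positivity
    have h2 : (0:ℝ) < (n:ℝ)^(r+1)*c^r*(1+i)^(r+1) := by positivity
    exact div_nonneg (mul_nonneg h1 hR) h2.le
  have hgeom : ∀ i:ℕ, 0 ≤ (2*A)^n/(n.factorial:ℝ) * (1/2)^i := fun i => by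
    have : (0:ℝ) ≤ 2*A := by linarith
    positivity
  have ha : ∀ i:ℕ, (i:ℝ) ≤ (n:ℝ) → F i ≤ A/(1+i) := by
    intro i hi
    have hi0 : (0:ℝ) ≤ (i:ℝ) := by positivity
    have h1i : (1:ℝ) ≤ 1 + i := by linarith
    have ht : (n:ℝ)+B+i ≤ (B+2)*n := by nlinarith
    have step1 : F i ≤ ((B+2)*(n:ℝ))^(r+1) * R/((n:ℝ)^(r+1)*c^r*(1+i)) := by
      refine div_le_div₀ (by positivity) ?_ (by positivity) ?_
      · exact mul_le_mul_of_nonneg_right (pow_le_pow_left₀ (ht0 i) ht _) hR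
      · have : (1:ℝ)+i ≤ (1+i)^(r+1) := le_self_pow₀ h1i (Nat.succ_ne_zero r)
        have h3 : (0:ℝ) < (n:ℝ)^(r+1)*c^r := by positivity
        calc (n:ℝ)^(r+1)*c^r*(1+i) ≤ (n:ℝ)^(r+1)*c^r*(1+i)^(r+1) := by nlinarith
          _ = (n:ℝ)^(r+1)*c^r*(1+i)^(r+1) := rfl
    have step2 : ((B+2)*(n:ℝ))^(r+1) * R/((n:ℝ)^(r+1)*c^r*(1+i))
        = ((B+2)^(r+1)*R/c^r)/(1+i) := by
      rw [mul_pow]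
      field_simp
    have step3 : ((B+2)^(r+1)*R/c^r)/(1+i) ≤ A/(1+i) :=
      div_le_div₀ hA0 hA (by linarith) le_rfl
    calc F i ≤ _ := step1
      _ = _ := step2
      _ ≤ _ := step3
  have hb : ∀ i:ℕ, (n:ℝ) ≤ 1+(i:ℝ) → F i ≤ A/(n:ℝ) := by
    intro i hi
    have hi0 : (0:ℝ) ≤ (i:ℝ) := by positivity
    have ht : (n:ℝ)+B+i ≤ (B+2)*(1+i) := by nlinarith
    have step1 : F i ≤ ((B+2)*(1+(i:ℝ)))^(r+1) * R/((n:ℝ)^(r+1)*c^r*(1+i)^(r+1)) := by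
      refine div_le_div₀ (by positivity) ?_ (by positivity) le_rfl
      exact mul_le_mul_of_nonneg_right (pow_le_pow_left₀ (ht0 i) ht _) hR
    have step2 : ((B+2)*(1+(i:ℝ)))^(r+1) * R/((n:ℝ)^(r+1)*c^r*(1+i)^(r+1))
        = ((B+2)^(r+1)*R/c^r)/(n:ℝ)^(r+1) := by
      rw [mul_pow]
      field_simp
    have step3 : ((B+2)^(r+1)*R/c^r)/(n:ℝ)^(r+1) ≤ A/(n:ℝ) :=
      div_le_div₀ hA0 hA hn0 (le_self_pow₀ hn1 (Nat.succ_ne_zero r))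
    calc F i ≤ _ := step1
      _ = _ := step2
      _ ≤ _ := step3
  have hprod_a : ∀ m:ℕ, (m:ℝ) ≤ (n:ℝ) → ∏ i ∈ range m, F i ≤ A^m/m.factorial := by
    intro m hm
    calc ∏ i ∈ range m, F i ≤ ∏ i ∈ range m, (A/(1+(i:ℝ))) := by
          refine Finset.prod_le_prod (fun i _ => hFnn i) fun i hi => ?_
          refine ha i ?_
          have : i < m := Finset.mem_range.1 hi
          have : (i:ℝ) ≤ (m:ℝ) := by exact_mod_cast this.le
          linarith
      _ = A^m/m.factorial := by
          rw [Finset.prod_div_distrib, Finset.prod_const, Finset.card_range, prod_cast_fact]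
  rcases le_or_gt k n with hkn | hnk
  · calc ∏ i ∈ range k, F i ≤ A^k/k.factorial := hprod_a k (by exact_mod_cast hkn)
      _ ≤ _ := le_add_of_nonneg_right (hgeom k)
  · have hsplit : ∏ i ∈ range k, F i = (∏ i ∈ range n, F i) * ∏ i ∈ Ico n k, F i :=
      (Finset.prod_range_mul_prod_Ico F hnk.le).symm
    have hb2 : ∏ i ∈ Ico n k, F i ≤ (1/2)^(k-n) := by
      calc ∏ i ∈ Ico n k, F i ≤ ∏ _i ∈ Ico n k, (A/(n:ℝ)) := by
            refine Finset.prod_le_prod (fun i _ => hFnn i) fun i hi => ?_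
            refine hb i ?_
            have : n ≤ i := (Finset.mem_Ico.1 hi).1
            have : (n:ℝ) ≤ (i:ℝ) := by exact_mod_cast this
            linarith
        _ = (A/(n:ℝ))^(k-n) := by rw [Finset.prod_const, Nat.card_Ico]
        _ ≤ (1/2)^(k-n) := by
            refine pow_le_pow_left₀ (by positivity) ?_ _
            rw [div_le_div_iff₀ hn0 (by norm_num : (0:ℝ) < 2)]
            linarith
    have hb1 : ∏ i ∈ range n, F i ≤ A^n/n.factorial := hprod_a n le_rfl
    calc ∏ i ∈ range k, F i ≤ (A^n/n.factorial) * (1/2)^(k-n) := by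
          rw [hsplit]
          exact mul_le_mul hb1 hb2 (Finset.prod_nonneg fun i _ => hFnn i) (by positivity)
      _ = ((2*A)^n/n.factorial) * (1/2)^k := by
          rw [pow_sub₀ _ (by norm_num : (1/2:ℝ) ≠ 0) hnk.le, mul_pow]
          have h2n : ((1:ℝ)/2)^n ≠ 0 := by positivity
          field_simp
          rw [mul_assoc, ← mul_pow]; norm_num
      _ ≤ _ := le_add_of_nonneg_left (by positivity)

lemma floor_ratio_tendsto (a : ℝ) :
    Tendsto (fun n:ℕ => (⌊a*(n:ℝ)⌋:ℝ)/n) atTop (𝓝 a) := by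
  have hlow : Tendsto (fun n:ℕ => a - 1/(n:ℝ)) atTop (𝓝 a) := by
    have := tendsto_one_div_atTop_nhds_zero_nat (𝕜 := ℝ)
    simpa using tendsto_const_nhds.sub this
  refine tendsto_of_tendsto_of_tendsto_of_le_of_le' hlow tendsto_const_nhds ?_ ?_
  · filter_upwards [eventually_ge_atTop 1] with n hn
    have hn0 : (0:ℝ) < (n:ℝ) := by exact_mod_cast hn
    have h1 : a*n - 1 ≤ (⌊a*(n:ℝ)⌋:ℝ) := by
      have := Int.sub_one_lt_floor (a*(n:ℝ))
      linarith
    have : (a*n - 1)/n ≤ (⌊a*(n:ℝ)⌋:ℝ)/n := by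
      exact div_le_div_of_nonneg_right h1 hn0.le |>.trans_eq rfl
    calc a - 1/(n:ℝ) = (a*n - 1)/n := by field_simp
      _ ≤ _ := this
  · filter_upwards [eventually_ge_atTop 1] with n hn
    have hn0 : (0:ℝ) < (n:ℝ) := by exact_mod_cast hn
    rw [div_le_iff₀ hn0]
    exact Int.floor_le _
lemma denom_norm_ge (r : ℕ) (α : Fin r → ℝ) (c : ℝ) (hc0 : 0 < c) (hc1 : c ≤ 1)
    (hcα : ∀ j, c ≤ α j + 1) (k : ℕ) :
    (c^k * (k.factorial:ℝ))^r * (k.factorial:ℝ)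
      ≤ ‖(∏ j, ((poch (α j + 1) k : ℝ) : ℂ)) * (k.factorial : ℂ)‖ := by
  have hDenEq : ‖(∏ j, ((poch (α j + 1) k : ℝ) : ℂ)) * (k.factorial : ℂ)‖
      = (∏ j, poch (α j + 1) k) * (k.factorial : ℝ) := by
    rw [norm_mul, norm_prod, Complex.norm_natCast]
    congr 1
    refine Finset.prod_congr rfl fun j _ => ?_
    rw [Complex.norm_real, Real.norm_eq_abs, abs_of_pos (poch_pos (by have := hcα j; linarith) k)]
  rw [hDenEq]
  refine mul_le_mul_of_nonneg_right ?_ (by positivity)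
  calc (c ^ k * (k.factorial:ℝ)) ^ r = ∏ _j : Fin r, (c ^ k * (k.factorial:ℝ)) := by
        rw [Finset.prod_const, Finset.card_univ, Fintype.card_fin]
    _ ≤ ∏ j, poch (α j + 1) k :=
        Finset.prod_le_prod (fun j _ => by positivity) fun j _ => poch_ge hc0 hc1 (hcα j) k

lemma g_norm_le (r : ℕ) (α : Fin r → ℝ) (q : Fin r → ℝ) (c R A : ℝ)
    (hc0 : 0 < c) (hc1 : c ≤ 1) (hcα : ∀ j, c ≤ α j + 1)
    (hQ0 : 0 ≤ ∏ j, q j) (hQ1 : ∏ j, q j ≤ 1) (hR : 0 ≤ R) (hRA : R/c^r ≤ A)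
    (k : ℕ) (z : ℂ) (hz : ‖z‖ ≤ R) :
    ‖(-(((∏ j, q j : ℝ) : ℝ) : ℂ) * z)^k / ((∏ j, ((poch (α j + 1) k : ℝ) : ℂ)) * (k.factorial : ℂ))‖
      ≤ A^k / k.factorial := by
  have hA0 : 0 ≤ A := le_trans (by positivity) hRA
  have hnum : ‖(-(((∏ j, q j : ℝ) : ℝ) : ℂ) * z)^k‖ ≤ R^k := by
    rw [norm_pow, norm_mul, norm_neg, Complex.norm_real, Real.norm_eq_abs, abs_of_nonneg hQ0]
    refine pow_le_pow_left₀ (by positivity) ?_ k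
    calc (∏ j, q j) * ‖z‖ ≤ 1 * R := by
          exact mul_le_mul hQ1 hz (norm_nonneg _) one_pos.le
      _ = R := one_mul R
  rw [norm_div]
  calc ‖(-(((∏ j, q j : ℝ) : ℝ) : ℂ) * z)^k‖ / ‖(∏ j, ((poch (α j + 1) k : ℝ) : ℂ)) * (k.factorial : ℂ)‖
      ≤ R^k / ((c^k * (k.factorial:ℝ))^r * (k.factorial:ℝ)) := by
        refine div_le_div₀ (pow_nonneg hR k) hnum (by positivity) (denom_norm_ge r α c hc0 hc1 hcα k)
    _ ≤ A^k / k.factorial := by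
        have h1 : R^k / ((c^k * (k.factorial:ℝ))^r * (k.factorial:ℝ))
            = (R/c^r)^k / (((k.factorial:ℝ))^r * (k.factorial:ℝ)) := by
          have hcne : c ≠ 0 := hc0.ne'
          have hfne : (k.factorial:ℝ) ≠ 0 := by positivity
          rw [div_pow, mul_pow]
          field_simp
          all_goals try ring
          all_goals exact Or.inl trivial
        rw [h1]
        have h2 : (R/c^r)^k ≤ A^k := pow_le_pow_left₀ (by positivity) hRA k
        have hf1 : (1:ℝ) ≤ (k.factorial:ℝ) := by exact_mod_cast k.factorial_pos
        have h3 : (k.factorial:ℝ) ≤ ((k.factorial:ℝ))^r * (k.factorial:ℝ) :=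
          le_mul_of_one_le_left (by positivity) (one_le_pow₀ hf1)
        exact div_le_div₀ (by positivity) h2 (by positivity) h3

noncomputable def JPcoef (r : ℕ) (α : Fin r → ℝ) (β : ℝ) (q : Fin r → ℝ) (n k : ℕ) : ℝ :=
  (poch (-((∑ j, (⌊q j * (n : ℝ)⌋ : ℝ)) + β)) k *
    ∏ j, poch (α j + (⌊q j * (n : ℝ)⌋ : ℝ) + 1) k) / (((n:ℝ))^(r+1))^k

noncomputable def JPD (r : ℕ) (α : Fin r → ℝ) (k : ℕ) : ℂ :=
  (∏ j, (poch (α j + 1) k : ℂ)) * (k.factorial : ℂ)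

lemma JPterm_eq (r : ℕ) (α : Fin r → ℝ) (β : ℝ) (q : Fin r → ℝ) (n k : ℕ) (z : ℂ) :
    ((poch (-((∑ j, (⌊q j * (n : ℝ)⌋ : ℝ)) + β)) k : ℂ) *
      ∏ j, (poch (α j + (⌊q j * (n : ℝ)⌋ : ℝ) + 1) k : ℂ)) *
      (z / (n : ℂ) ^ (r + 1)) ^ k /
      ((∏ j, (poch (α j + 1) k : ℂ)) * (k.factorial : ℂ))
    = ((JPcoef r α β q n k : ℝ) : ℂ) / JPD r α k * z ^ k := by
  have key : ∀ X D w zz : ℂ, X * (zz / w)^k / D = X / w^k / D * zz^k := by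
    intro X D w zz
    rw [div_pow]
    ring
  rw [key]
  congr 2
  rw [JPcoef]
  push_cast
  ring

lemma JPgterm_eq (r : ℕ) (α : Fin r → ℝ) (q : Fin r → ℝ) (k : ℕ) (z : ℂ) :
    (-(((∏ j, q j : ℝ)) : ℂ) * z) ^ k /
      ((∏ j, (poch (α j + 1) k : ℂ)) * (k.factorial : ℂ))
    = ((((-1:ℝ)^k * ∏ j, q j ^ k : ℝ)) : ℂ) / JPD r α k * z ^ k := by
  have key : ∀ Q D zz : ℂ, (-Q * zz)^k / D = (-1)^k * Q^k / D * zz^k := by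
    intro Q D zz
    rw [neg_mul, neg_pow, mul_pow]
    ring
  rw [key]
  congr 2
  push_cast
  rw [Finset.prod_pow]

lemma JPcoef_tendsto (r : ℕ) (α : Fin r → ℝ) (β : ℝ) (q : Fin r → ℝ)
    (hq1 : ∑ j, q j = 1) (k : ℕ) :
    Tendsto (fun n => JPcoef r α β q n k) atTop
      (𝓝 ((-1:ℝ)^k * ∏ j, q j ^ k)) := by
  have hident : ∀ n : ℕ, JPcoef r α β q n k =
      (∏ i ∈ range k, ((-((∑ j, (⌊q j * (n : ℝ)⌋ : ℝ)) + β) + i)/(n:ℝ))) *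
      ∏ j, ∏ i ∈ range k, ((α j + (⌊q j * (n : ℝ)⌋ : ℝ) + 1 + i)/(n:ℝ)) := by
    intro n
    simp only [JPcoef, poch, Finset.prod_div_distrib, Finset.prod_const, Finset.card_range,
      Finset.card_univ, Fintype.card_fin]
    ring
  have hSdiv : Tendsto (fun n:ℕ => (∑ j, (⌊q j * (n : ℝ)⌋ : ℝ))/(n:ℝ)) atTop (𝓝 1) := by
    have : ∀ n:ℕ, (∑ j, (⌊q j * (n : ℝ)⌋ : ℝ))/(n:ℝ)
        = ∑ j, (⌊q j * (n : ℝ)⌋ : ℝ)/(n:ℝ) := fun n => Finset.sum_div _ _ _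
    rw [show (1:ℝ) = ∑ j, q j from hq1.symm]
    simp only [this]
    exact tendsto_finset_sum _ fun j _ => floor_ratio_tendsto (q j)
  simp only [hident]
  have h1 : Tendsto (fun n:ℕ =>
      ∏ i ∈ range k, ((-((∑ j, (⌊q j * (n : ℝ)⌋ : ℝ)) + β) + i)/(n:ℝ))) atTop
      (𝓝 ((-1:ℝ)^k)) := by
    rw [show ((-1:ℝ)^k) = ∏ _i ∈ range k, (-1:ℝ) by rw [Finset.prod_const, Finset.card_range]]
    refine tendsto_finset_prod _ fun i _ => ?_
    have heq : ∀ n:ℕ, (-((∑ j, (⌊q j * (n : ℝ)⌋ : ℝ)) + β) + i)/(n:ℝ)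
        = -((∑ j, (⌊q j * (n : ℝ)⌋ : ℝ))/(n:ℝ)) + ((i:ℝ) - β) * (1/(n:ℝ)) := fun n => by
      ring
    simp only [heq]
    have := (hSdiv.neg).add ((tendsto_one_div_atTop_nhds_zero_nat).const_mul ((i:ℝ) - β))
    simpa using this
  have h2 : Tendsto (fun n:ℕ =>
      ∏ j, ∏ i ∈ range k, ((α j + (⌊q j * (n : ℝ)⌋ : ℝ) + 1 + i)/(n:ℝ))) atTop
      (𝓝 (∏ j, q j ^ k)) := by
    refine tendsto_finset_prod _ fun j _ => ?_
    rw [show q j ^ k = ∏ _i ∈ range k, q j by rw [Finset.prod_const, Finset.card_range]]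
    refine tendsto_finset_prod _ fun i _ => ?_
    have heq : ∀ n:ℕ, (α j + (⌊q j * (n : ℝ)⌋ : ℝ) + 1 + i)/(n:ℝ)
        = (⌊q j * (n : ℝ)⌋ : ℝ)/(n:ℝ) + (α j + 1 + (i:ℝ)) * (1/(n:ℝ)) := fun n => by
      ring
    simp only [heq]
    have := (floor_ratio_tendsto (q j)).add
      ((tendsto_one_div_atTop_nhds_zero_nat).const_mul (α j + 1 + (i:ℝ)))
    simpa using this
  exact h1.mul h2

end JPaux

set_option maxHeartbeats 2000000

/-- The Mehler–Heine limit for Jacobi–Piñeiro polynomials: with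
`F_n(x) = ₍r+1₎F_r(-|n⃗|-β, α_1+n_1+1,…,α_r+n_r+1; α_1+1,…,α_r+1; x)` and
`n_j = ⌊q_j n⌋`, one has `F_n(z/n^{r+1}) → ₀F_r(-; α_1+1,…,α_r+1; -q_1⋯q_r z)`
uniformly on compact subsets of `ℂ`. -/
theorem jacobi_pineiro_mehler_heine (r : ℕ) (hr : 1 ≤ r) (α : Fin r → ℝ) (β : ℝ)
    (hα : ∀ j, α j > -1) (hβ : β > -1) (q : Fin r → ℝ) (hq : ∀ j, q j > 0)
    (hq1 : ∑ j, q j = 1) :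
    ∀ K : Set ℂ, IsCompact K →
      TendstoUniformlyOn
        (fun (n : ℕ) (z : ℂ) => ∑' k : ℕ,
          ((poch (-((∑ j, (⌊q j * (n : ℝ)⌋ : ℝ)) + β)) k : ℂ) *
            ∏ j, (poch (α j + (⌊q j * (n : ℝ)⌋ : ℝ) + 1) k : ℂ)) *
            (z / (n : ℂ) ^ (r + 1)) ^ k /
            ((∏ j, (poch (α j + 1) k : ℂ)) * (k.factorial : ℂ)))
        (fun z : ℂ => ∑' k : ℕ,
          (-(((∏ j, q j : ℝ) : ℂ)) * z) ^ k /
            ((∏ j, (poch (α j + 1) k : ℂ)) * (k.factorial : ℂ)))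
        atTop K := by
  intro K hK
  classical
  obtain ⟨R₀, hR₀⟩ := hK.isBounded.exists_norm_le
  set R := max R₀ 0 with hRdef
  have hR0 : 0 ≤ R := le_max_right _ _
  have hKR : ∀ z ∈ K, ‖z‖ ≤ R := fun z hz => (hR₀ z hz).trans (le_max_left _ _)
  have hne : Nonempty (Fin r) := ⟨⟨0, hr⟩⟩
  -- constants
  set c := min 1 (Finset.univ.inf' Finset.univ_nonempty fun j => α j + 1) with hcdef
  have hc0 : 0 < c := by
    refine lt_min one_pos ?_
    rw [Finset.lt_inf'_iff]
    exact fun j _ => by linarith [hα j]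
  have hc1 : c ≤ 1 := min_le_left _ _
  have hcα : ∀ j, c ≤ α j + 1 := fun j =>
    (min_le_right _ _).trans (Finset.inf'_le _ (Finset.mem_univ j))
  set B := 1 + |β| + Finset.univ.sup' Finset.univ_nonempty fun j => |α j| with hBdef
  have hsup0 : 0 ≤ Finset.univ.sup' Finset.univ_nonempty fun j => |α j| :=
    (abs_nonneg (α ⟨0, hr⟩)).trans
      (Finset.le_sup' (f := fun j => |α j|) (Finset.mem_univ ⟨0, hr⟩))
  have hB1 : 1 ≤ B := by
    have := abs_nonneg β
    rw [hBdef]; linarith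
  have hβB : |β| ≤ B := by rw [hBdef]; linarith
  have hαB : ∀ j, α j + 1 ≤ B := fun j => by
    have h1 : |α j| ≤ Finset.univ.sup' Finset.univ_nonempty fun j => |α j| :=
      Finset.le_sup' (f := fun j => |α j|) (Finset.mem_univ j)
    have h2 := le_abs_self (α j)
    have := abs_nonneg β
    rw [hBdef]; linarith
  have hqle : ∀ j, q j ≤ 1 := fun j => by
    have h := Finset.single_le_sum (f := q) (fun i _ => (hq i).le) (Finset.mem_univ j)
    rw [hq1] at h; exact h
  have hQ0 : 0 ≤ ∏ j, q j := Finset.prod_nonneg fun j _ => (hq j).le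
  have hQ1 : ∏ j, q j ≤ 1 := Finset.prod_le_one (fun j _ => (hq j).le) fun j _ => hqle j
  set A := (B + 2) ^ (r + 1) * (R / c ^ r + 1) with hAdef
  have hA0 : 0 ≤ A := by positivity
  have hBp : (1:ℝ) ≤ (B + 2) ^ (r + 1) := one_le_pow₀ (by linarith)
  have hA : (B + 2) ^ (r + 1) * R / c ^ r ≤ A := by
    rw [hAdef, mul_div_assoc]
    have h : R / c ^ r ≤ R / c ^ r + 1 := by linarith
    exact mul_le_mul_of_nonneg_left h (by positivity)
  have hRA : R / c ^ r ≤ A := by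
    calc R / c ^ r ≤ (B + 2) ^ (r + 1) * R / c ^ r := by
          rw [mul_div_assoc]
          exact le_mul_of_one_le_left (by positivity) hBp
      _ ≤ A := hA
  -- summability basics
  have hsumA : Summable (fun k : ℕ => A ^ k / (k.factorial : ℝ)) :=
    Real.summable_pow_div_factorial A
  have hsumhalf : Summable (fun k : ℕ => ((1:ℝ)/2) ^ k) :=
    summable_geometric_of_lt_one (by norm_num) (by norm_num)
  rw [Metric.tendstoUniformlyOn_iff]
  intro ε hε
  obtain ⟨K₀, hK₀⟩ : ∃ m : ℕ, ∑' k : ℕ, A ^ (k + m) / (((k + m).factorial : ℝ)) < ε/8 :=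
    ((tendsto_sum_nat_add (fun k : ℕ => A ^ k / (k.factorial : ℝ))).eventually_lt_const
      (by linarith)).exists
  have hhead : Tendsto (fun n : ℕ => ∑ k ∈ Finset.range K₀,
      ‖((JPcoef r α β q n k : ℝ) : ℂ) / JPD r α k -
        ((((-1:ℝ)^k * ∏ j, q j ^ k : ℝ)) : ℂ) / JPD r α k‖ * R ^ k) atTop (nhds 0) := by
    have hterm : ∀ k : ℕ, Tendsto (fun n : ℕ =>
        ‖((JPcoef r α β q n k : ℝ) : ℂ) / JPD r α k -
          ((((-1:ℝ)^k * ∏ j, q j ^ k : ℝ)) : ℂ) / JPD r α k‖ * R ^ k) atTop (nhds 0) := by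
      intro k
      have h1 := JPcoef_tendsto r α β q hq1 k
      have h2 : Tendsto (fun n : ℕ => ((JPcoef r α β q n k : ℝ) : ℂ)) atTop
          (nhds ((((-1:ℝ)^k * ∏ j, q j ^ k : ℝ)) : ℂ)) :=
        (Complex.continuous_ofReal.tendsto _).comp h1
      have h3 := ((h2.div_const (JPD r α k)).sub_const
        (((((-1:ℝ)^k * ∏ j, q j ^ k : ℝ)) : ℂ) / JPD r α k)).norm
      rw [sub_self, norm_zero] at h3
      have h4 := h3.mul_const (R ^ k)
      simpa using h4
    have hsum := tendsto_finset_sum (Finset.range K₀) fun k _ => hterm k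
    simpa using hsum
  have hWlim : Tendsto (fun n : ℕ => ((2*A) ^ n / (n.factorial : ℝ)) * 2) atTop (nhds 0) := by
    have := (Real.summable_pow_div_factorial (2*A)).tendsto_atTop_zero.mul_const 2
    simpa using this
  filter_upwards [eventually_ge_atTop 1,
    tendsto_natCast_atTop_atTop.eventually_ge_atTop (2*A),
    hWlim.eventually_lt_const (show (0:ℝ) < ε/8 by linarith),
    hhead.eventually_lt_const (show (0:ℝ) < ε/4 by linarith)] with n hn1 hn2 hn3 hn4
  intro z hzK
  have hz : ‖z‖ ≤ R := hKR z hzK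
  set W : ℝ := (2*A) ^ n / (n.factorial : ℝ) with hWdef
  have hW0 : 0 ≤ W := by
    have h2A0 : (0:ℝ) ≤ 2*A := by linarith
    rw [hWdef]; positivity
  -- the two term families
  set f : ℕ → ℂ := fun k =>
    ((poch (-((∑ j, (⌊q j * (n : ℝ)⌋ : ℝ)) + β)) k : ℂ) *
      ∏ j, (poch (α j + (⌊q j * (n : ℝ)⌋ : ℝ) + 1) k : ℂ)) *
      (z / (n : ℂ) ^ (r + 1)) ^ k /
      ((∏ j, (poch (α j + 1) k : ℂ)) * (k.factorial : ℂ)) with hfdef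
  set g : ℕ → ℂ := fun k =>
    (-(((∏ j, q j : ℝ)) : ℂ) * z) ^ k /
      ((∏ j, (poch (α j + 1) k : ℂ)) * (k.factorial : ℂ)) with hgdef
  have hfb : ∀ k, ‖f k‖ ≤ A ^ k / k.factorial + W * (1/2) ^ k := fun k =>
    (term_norm_le r α β q B c R hc0 hc1 hcα hβB hαB hq hqle hq1 hR0 n k hn1 z hz).trans
      (prod_factor_le B c R A r hB1 hc0 hc1 hR0 hA hA0 n k hn1 hn2)
  have hgbd : ∀ k, ‖g k‖ ≤ A ^ k / k.factorial := fun k =>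
    g_norm_le r α q c R A hc0 hc1 hcα hQ0 hQ1 hR0 hRA k z hz
  have hsumWb : Summable (fun k : ℕ => A ^ k / (k.factorial : ℝ) + W * (1/2) ^ k) :=
    hsumA.add (hsumhalf.mul_left W)
  have hSfn : Summable (fun k => ‖f k‖) :=
    hsumWb.of_nonneg_of_le (fun k => norm_nonneg _) hfb
  have hSf : Summable f := hSfn.of_norm
  have hSgn : Summable (fun k => ‖g k‖) :=
    hsumA.of_nonneg_of_le (fun k => norm_nonneg _) hgbd
  have hSg : Summable g := hSgn.of_norm
  -- split the sums
  have hsplitf : ∑' k, f k = (∑ k ∈ Finset.range K₀, f k) + ∑' k, f (k + K₀) :=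
    (Summable.sum_add_tsum_nat_add K₀ hSf).symm
  have hsplitg : ∑' k, g k = (∑ k ∈ Finset.range K₀, g k) + ∑' k, g (k + K₀) :=
    (Summable.sum_add_tsum_nat_add K₀ hSg).symm
  -- head estimate
  have hdk : ∀ k, ‖g k - f k‖ ≤
      ‖((JPcoef r α β q n k : ℝ) : ℂ) / JPD r α k -
        ((((-1:ℝ)^k * ∏ j, q j ^ k : ℝ)) : ℂ) / JPD r α k‖ * R ^ k := by
    intro k
    rw [hfdef, hgdef]
    simp only
    rw [JPgterm_eq r α q k z, JPterm_eq r α β q n k z, ← sub_mul, norm_mul, norm_pow,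
      norm_sub_rev]
    exact mul_le_mul_of_nonneg_left (pow_le_pow_left₀ (norm_nonneg z) hz k) (norm_nonneg _)
  have hheadb : ‖(∑ k ∈ Finset.range K₀, g k) - ∑ k ∈ Finset.range K₀, f k‖ < ε/4 := by
    rw [← Finset.sum_sub_distrib]
    calc ‖∑ k ∈ Finset.range K₀, (g k - f k)‖ ≤ ∑ k ∈ Finset.range K₀, ‖g k - f k‖ :=
          norm_sum_le _ _
      _ ≤ ∑ k ∈ Finset.range K₀,
            ‖((JPcoef r α β q n k : ℝ) : ℂ) / JPD r α k -
              ((((-1:ℝ)^k * ∏ j, q j ^ k : ℝ)) : ℂ) / JPD r α k‖ * R ^ k :=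
          Finset.sum_le_sum fun k _ => hdk k
      _ < ε/4 := hn4
  -- tail estimates
  have hsumA_sh : Summable (fun k : ℕ => A ^ (k + K₀) / ((k + K₀).factorial : ℝ)) :=
    (summable_nat_add_iff K₀).2 hsumA
  have hsumhalf_sh : Summable (fun k : ℕ => ((1:ℝ)/2) ^ (k + K₀)) :=
    (summable_nat_add_iff K₀).2 hsumhalf
  have hhalf_sh : ∑' k : ℕ, ((1:ℝ)/2) ^ (k + K₀) ≤ 2 := by
    calc ∑' k : ℕ, ((1:ℝ)/2) ^ (k + K₀) ≤ ∑' k : ℕ, ((1:ℝ)/2) ^ k :=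
          Summable.tsum_le_tsum (fun k => pow_le_pow_of_le_one (by norm_num) (by norm_num)
            (Nat.le_add_right k K₀)) hsumhalf_sh hsumhalf
      _ = 2 := tsum_geometric_two
  have htailf : ‖∑' k, f (k + K₀)‖ < ε/8 + ε/8 := by
    have h1 : ‖∑' k, f (k + K₀)‖ ≤ ∑' k, ‖f (k + K₀)‖ :=
      norm_tsum_le_tsum_norm ((summable_nat_add_iff K₀).2 hSfn)
    have h2 : ∑' k, ‖f (k + K₀)‖ ≤
        ∑' k : ℕ, (A ^ (k + K₀) / ((k + K₀).factorial : ℝ) + W * (1/2) ^ (k + K₀)) :=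
      Summable.tsum_le_tsum (fun k => hfb (k + K₀)) ((summable_nat_add_iff K₀).2 hSfn)
        (hsumA_sh.add (hsumhalf_sh.mul_left W))
    have h3 : ∑' k : ℕ, (A ^ (k + K₀) / ((k + K₀).factorial : ℝ) + W * (1/2) ^ (k + K₀))
        = (∑' k : ℕ, A ^ (k + K₀) / ((k + K₀).factorial : ℝ)) +
          W * ∑' k : ℕ, ((1:ℝ)/2) ^ (k + K₀) := by
      rw [Summable.tsum_add hsumA_sh (hsumhalf_sh.mul_left W), tsum_mul_left]
    have h4 : W * ∑' k : ℕ, ((1:ℝ)/2) ^ (k + K₀) ≤ W * 2 :=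
      mul_le_mul_of_nonneg_left hhalf_sh hW0
    have h5 : W * 2 < ε/8 := hn3
    calc ‖∑' k, f (k + K₀)‖ ≤ _ := h1
      _ ≤ _ := h2
      _ = _ := h3
      _ < ε/8 + ε/8 := by
          have := hK₀
          linarith
  have htailg : ‖∑' k, g (k + K₀)‖ < ε/8 := by
    have h1 : ‖∑' k, g (k + K₀)‖ ≤ ∑' k, ‖g (k + K₀)‖ :=
      norm_tsum_le_tsum_norm ((summable_nat_add_iff K₀).2 hSgn)
    have h2 : ∑' k, ‖g (k + K₀)‖ ≤ ∑' k : ℕ, A ^ (k + K₀) / ((k + K₀).factorial : ℝ) :=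
      Summable.tsum_le_tsum (fun k => hgbd (k + K₀)) ((summable_nat_add_iff K₀).2 hSgn) hsumA_sh
    calc ‖∑' k, g (k + K₀)‖ ≤ _ := h1
      _ ≤ _ := h2
      _ < ε/8 := hK₀
  -- put it together
  rw [dist_eq_norm]
  calc ‖(∑' k, g k) - ∑' k, f k‖
      = ‖((∑ k ∈ Finset.range K₀, g k) - ∑ k ∈ Finset.range K₀, f k) +
          ((∑' k, g (k + K₀)) - ∑' k, f (k + K₀))‖ := by
        rw [hsplitf, hsplitg]
        congr 1
        ring
    _ ≤ ‖(∑ k ∈ Finset.range K₀, g k) - ∑ k ∈ Finset.range K₀, f k‖ +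
        ‖(∑' k, g (k + K₀)) - ∑' k, f (k + K₀)‖ := norm_add_le _ _
    _ ≤ ‖(∑ k ∈ Finset.range K₀, g k) - ∑ k ∈ Finset.range K₀, f k‖ +
        (‖∑' k, g (k + K₀)‖ + ‖∑' k, f (k + K₀)‖) := by
        exact add_le_add_right (norm_sub_le _ _) _
    _ < ε/4 + (ε/8 + (ε/8 + ε/8)) := by
        have := htailf; have := htailg; have := hheadb
        linarith
    _ < ε := by linarith
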